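/- Let u ∈ B(H) be a unitary operator on a Hilbert space H, and let (p_n) be a sequence of finite-rank orthogonal projections on H increasing to the identity in the *-strong operator topology. Then for each n there is a unitary operator u_n on p_n H (viewed as an operator on H that is zero on the orthogonal complement, or equivalently u_n ⊕ (1 − p_n)) such that u_n → u in the *-strong operator topology. -/

import Mathlib

open Filter Topology

noncomputable section

local notation "⟪" x ", " y "⟫" => @inner ℂ _ _ x y

/-- Polar-style approximation: every contraction on a finite-dimensional complex
inner product space is close to a unitary, quantitatively. -/
lemma exists_unitary_close {E : Type*} [NormedAddCommGroup E] [InnerProductSpace ℂ E]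
    [FiniteDimensional ℂ E] (T : E →ₗ[ℂ] E) (hT : ∀ x, ‖T x‖ ≤ ‖x‖) :
    ∃ W : E ≃ₗᵢ[ℂ] E,
      (∀ x, ‖W x - T x‖ ^ 2 ≤ ‖x‖ ^ 2 - ‖T x‖ ^ 2) ∧
      (∀ x, ‖W.symm x - LinearMap.adjoint T x‖ ^ 2 ≤ ‖x‖ ^ 2 - ‖LinearMap.adjoint T x‖ ^ 2) := by
  classical
  set n := Module.finrank ℂ E with hn
  have hS : LinearMap.IsSymmetric (LinearMap.adjoint T * T) :=
    LinearMap.isSymmetric_adjoint_mul_self T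
  set b : OrthonormalBasis (Fin n) ℂ E := hS.eigenvectorBasis rfl with hbdef
  set lam : Fin n → ℝ := hS.eigenvalues rfl with hlamdef
  have hblam : ∀ i, (LinearMap.adjoint T * T) (b i) = (lam i : ℂ) • b i := fun i =>
    hS.apply_eigenvectorBasis rfl i
  have hinnerT : ∀ i j, ⟪T (b i), T (b j)⟫ = if i = j then (lam i : ℂ) else 0 := by
    intro i j
    have : ⟪T (b i), T (b j)⟫ = ⟪b i, (LinearMap.adjoint T * T) (b j)⟫ := by
      rw [Module.End.mul_apply, LinearMap.adjoint_inner_right]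
    rw [this, hblam j, inner_smul_right]
    rcases eq_or_ne i j with h | h
    · subst h
      rw [if_pos rfl]
      have : ⟪b i, b i⟫ = (1 : ℂ) := by
        rw [inner_self_eq_norm_sq_to_K, b.orthonormal.1 i]
        norm_num
      rw [this, mul_one]
    · rw [if_neg h, b.orthonormal.2 h, mul_zero]
  have hlam_eq : ∀ i, (lam i : ℝ) = ‖T (b i)‖ ^ 2 := by
    intro i
    have h1 := hinnerT i i
    rw [if_pos rfl] at h1
    have h2 : ⟪T (b i), T (b i)⟫ = (‖T (b i)‖ ^ 2 : ℂ) := by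
      rw [inner_self_eq_norm_sq_to_K]; norm_num
    rw [h2] at h1
    exact_mod_cast h1.symm
  have hlam_nonneg : ∀ i, 0 ≤ lam i := fun i => (hlam_eq i) ▸ sq_nonneg _
  have hlam_le_one : ∀ i, lam i ≤ 1 := by
    intro i
    have h1 := hT (b i)
    rw [b.orthonormal.1 i] at h1
    rw [hlam_eq i]
    nlinarith [norm_nonneg (T (b i))]
  -- normalized images
  set f : Fin n → E := fun i => (((Real.sqrt (lam i))⁻¹ : ℝ) : ℂ) • T (b i) with hfdef
  set sgood : Set (Fin n) := {i | lam i ≠ 0} with hsdef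
  have hsqrt_ne : ∀ i ∈ sgood, Real.sqrt (lam i) ≠ 0 := by
    intro i hi
    have : 0 < lam i := lt_of_le_of_ne (hlam_nonneg i) (Ne.symm hi)
    positivity
  have hforth : Orthonormal ℂ (sgood.restrict f) := by
    rw [orthonormal_iff_ite]
    rintro ⟨i, hi⟩ ⟨j, hj⟩
    simp only [Set.restrict_apply, Set.restrict, hfdef]
    rw [inner_smul_left, inner_smul_right, hinnerT i j, Complex.conj_ofReal]
    rcases eq_or_ne i j with h | h
    · subst h
      rw [if_pos rfl, if_pos rfl]
      have h4 : ((Real.sqrt (lam i) : ℝ) : ℂ) ≠ 0 := by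
        exact_mod_cast hsqrt_ne i hi
      have h2 : ((Real.sqrt (lam i) : ℝ) : ℂ) * ((Real.sqrt (lam i) : ℝ) : ℂ)
          = ((lam i : ℝ) : ℂ) := by
        rw [← Complex.ofReal_mul, Real.mul_self_sqrt (hlam_nonneg i)]
      rw [← h2]
      push_cast
      field_simp
    · have : (⟨i, hi⟩ : sgood) ≠ ⟨j, hj⟩ := by simpa using h
      rw [if_neg h, if_neg this, mul_zero, mul_zero]
  have card_eq : Module.finrank ℂ E = Fintype.card (Fin n) := by simp [hn]
  obtain ⟨c, hc⟩ := hforth.exists_orthonormalBasis_extension_of_card_eq card_eq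
  have hTb0 : ∀ i, lam i = 0 → T (b i) = 0 := by
    intro i hi
    have : ‖T (b i)‖ ^ 2 = 0 := by rw [← hlam_eq i, hi]
    simpa using pow_eq_zero_iff (n := 2) (by norm_num) |>.mp this
  have hTb : ∀ i, T (b i) = ((Real.sqrt (lam i) : ℝ) : ℂ) • c i := by
    intro i
    by_cases hi : lam i = 0
    · rw [hTb0 i hi, hi, Real.sqrt_zero]; simp
    · rw [hc i hi, hfdef]
      simp only [smul_smul]
      rw [← Complex.ofReal_mul, mul_inv_cancel₀ (hsqrt_ne i hi)]
      simp
  set W : E ≃ₗᵢ[ℂ] E := b.repr.trans c.repr.symm with hWdef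
  have hW : ∀ i, W (b i) = c i := by
    intro i
    rw [hWdef]
    simp only [LinearIsometryEquiv.trans_apply]
    rw [b.repr_self, c.repr_symm_single]
  have hWs : ∀ i, W.symm (c i) = b i := by
    intro i
    rw [← hW i, LinearIsometryEquiv.symm_apply_apply]
  -- norm formulas
  have hnorm : ∀ (d : OrthonormalBasis (Fin n) ℂ E) (g : Fin n → ℂ),
      ‖∑ i, g i • d i‖ ^ 2 = ∑ i, ‖g i‖ ^ 2 := by
    intro d g
    have h1 := d.orthonormal.inner_sum g g Finset.univ
    have h2 : ⟪∑ i, g i • d i, ∑ i, g i • d i⟫ = ((‖∑ i, g i • d i‖ ^ 2 : ℝ) : ℂ) := by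
      rw [inner_self_eq_norm_sq_to_K]; norm_num
    have h3 : ∀ i : Fin n, (starRingEnd ℂ) (g i) * g i = ((‖g i‖ ^ 2 : ℝ) : ℂ) := by
      intro i
      rw [RCLike.conj_mul]
      norm_num
    rw [h2] at h1
    rw [Finset.sum_congr rfl (fun i _ => h3 i)] at h1
    have h4 : ((‖∑ i, g i • d i‖ ^ 2 : ℝ) : ℂ) = (((∑ i, ‖g i‖ ^ 2 : ℝ)) : ℂ) := by
      rw [h1]; push_cast; ring
    exact_mod_cast h4
  have key_ineq : ∀ i : Fin n, (1 - Real.sqrt (lam i)) ^ 2 ≤ 1 - lam i := by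
    intro i
    have h1 : Real.sqrt (lam i) ^ 2 = lam i := Real.sq_sqrt (hlam_nonneg i)
    have h2 : (0:ℝ) ≤ Real.sqrt (lam i) := Real.sqrt_nonneg _
    nlinarith [hlam_le_one i, hlam_nonneg i]
  -- forward estimate
  have fwd : ∀ x, ‖W x - T x‖ ^ 2 ≤ ‖x‖ ^ 2 - ‖T x‖ ^ 2 := by
    intro x
    set r : Fin n → ℂ := fun i => b.repr x i with hrdef
    have hx : ∑ i, r i • b i = x := b.sum_repr x
    have hWx : W x = ∑ i, r i • c i := by
      conv_lhs => rw [← hx]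
      rw [map_sum]
      exact Finset.sum_congr rfl fun i _ => by rw [LinearIsometryEquiv.map_smul, hW]
    have hTx : T x = ∑ i, (r i * ((Real.sqrt (lam i) : ℝ) : ℂ)) • c i := by
      conv_lhs => rw [← hx]
      rw [map_sum]
      exact Finset.sum_congr rfl fun i _ => by rw [map_smul, hTb, smul_smul]
    have hdiff : W x - T x = ∑ i, (r i * (1 - ((Real.sqrt (lam i) : ℝ) : ℂ))) • c i := by
      rw [hWx, hTx, ← Finset.sum_sub_distrib]
      exact Finset.sum_congr rfl fun i _ => by rw [← sub_smul]; ring_nf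
    have e1 : ‖W x - T x‖ ^ 2 = ∑ i, ‖r i‖ ^ 2 * (1 - Real.sqrt (lam i)) ^ 2 := by
      rw [hdiff, hnorm c]
      refine Finset.sum_congr rfl fun i _ => ?_
      rw [norm_mul, mul_pow]
      congr 1
      have : (1 - ((Real.sqrt (lam i) : ℝ) : ℂ)) = (((1 - Real.sqrt (lam i) : ℝ)) : ℂ) := by
        push_cast; ring
      rw [this, Complex.norm_real, Real.norm_eq_abs, sq_abs]
    have e2 : ‖x‖ ^ 2 = ∑ i, ‖r i‖ ^ 2 := by rw [← hx, hnorm b]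
    have e3 : ‖T x‖ ^ 2 = ∑ i, ‖r i‖ ^ 2 * lam i := by
      rw [hTx, hnorm c]
      refine Finset.sum_congr rfl fun i _ => ?_
      rw [norm_mul, mul_pow, Complex.norm_real, Real.norm_eq_abs, sq_abs, Real.sq_sqrt (hlam_nonneg i)]
    rw [e1, e2, e3, ← Finset.sum_sub_distrib]
    refine Finset.sum_le_sum fun i _ => ?_
    have := key_ineq i
    nlinarith [sq_nonneg (‖r i‖)]
  -- adjoint formula
  have hTadj : ∀ i, LinearMap.adjoint T (c i) = ((Real.sqrt (lam i) : ℝ) : ℂ) • b i := by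
    intro i
    have expand : LinearMap.adjoint T (c i) = ∑ j, ⟪b j, LinearMap.adjoint T (c i)⟫ • b j :=
      (b.sum_repr' _).symm
    have hco : ∀ j, ⟪b j, LinearMap.adjoint T (c i)⟫
        = if j = i then ((Real.sqrt (lam i) : ℝ) : ℂ) else 0 := by
      intro j
      rw [LinearMap.adjoint_inner_right, hTb j, inner_smul_left, Complex.conj_ofReal]
      rcases eq_or_ne j i with h | h
      · subst h
        rw [if_pos rfl]
        have : ⟪c j, c j⟫ = (1 : ℂ) := by
          rw [inner_self_eq_norm_sq_to_K, c.orthonormal.1 j]; norm_num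
        rw [this, mul_one]
      · rw [if_neg h, c.orthonormal.2 h, mul_zero]
    rw [expand, Finset.sum_congr rfl fun j _ => by rw [hco j]]
    rw [Finset.sum_eq_single i (fun j _ hj => by rw [if_neg hj, zero_smul])
      (fun h => absurd (Finset.mem_univ i) h), if_pos rfl]
  -- backward estimate
  have bwd : ∀ y, ‖W.symm y - LinearMap.adjoint T y‖ ^ 2
      ≤ ‖y‖ ^ 2 - ‖LinearMap.adjoint T y‖ ^ 2 := by
    intro y
    set d : Fin n → ℂ := fun i => c.repr y i with hddef
    have hy : ∑ i, d i • c i = y := c.sum_repr y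
    have hWy : W.symm y = ∑ i, d i • b i := by
      conv_lhs => rw [← hy]
      rw [map_sum]
      exact Finset.sum_congr rfl fun i _ => by rw [LinearIsometryEquiv.map_smul, hWs]
    have hTy : LinearMap.adjoint T y = ∑ i, (d i * ((Real.sqrt (lam i) : ℝ) : ℂ)) • b i := by
      conv_lhs => rw [← hy]
      rw [map_sum]
      exact Finset.sum_congr rfl fun i _ => by rw [map_smul, hTadj, smul_smul]
    have hdiff : W.symm y - LinearMap.adjoint T y
        = ∑ i, (d i * (1 - ((Real.sqrt (lam i) : ℝ) : ℂ))) • b i := by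
      rw [hWy, hTy, ← Finset.sum_sub_distrib]
      exact Finset.sum_congr rfl fun i _ => by rw [← sub_smul]; ring_nf
    have e1 : ‖W.symm y - LinearMap.adjoint T y‖ ^ 2
        = ∑ i, ‖d i‖ ^ 2 * (1 - Real.sqrt (lam i)) ^ 2 := by
      rw [hdiff, hnorm b]
      refine Finset.sum_congr rfl fun i _ => ?_
      rw [norm_mul, mul_pow]
      congr 1
      have : (1 - ((Real.sqrt (lam i) : ℝ) : ℂ)) = (((1 - Real.sqrt (lam i) : ℝ)) : ℂ) := by
        push_cast; ring
      rw [this, Complex.norm_real, Real.norm_eq_abs, sq_abs]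
    have e2 : ‖y‖ ^ 2 = ∑ i, ‖d i‖ ^ 2 := by rw [← hy, hnorm c]
    have e3 : ‖LinearMap.adjoint T y‖ ^ 2 = ∑ i, ‖d i‖ ^ 2 * lam i := by
      rw [hTy, hnorm b]
      refine Finset.sum_congr rfl fun i _ => ?_
      rw [norm_mul, mul_pow, Complex.norm_real, Real.norm_eq_abs, sq_abs, Real.sq_sqrt (hlam_nonneg i)]
    rw [e1, e2, e3, ← Finset.sum_sub_distrib]
    refine Finset.sum_le_sum fun i _ => ?_
    have := key_ineq i
    nlinarith [sq_nonneg (‖d i‖)]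
  exact ⟨W, fwd, bwd⟩

/-- Convergence of the error bound. -/
lemma conv_aux {H : Type} [NormedAddCommGroup H] [InnerProductSpace ℂ H]
    (p : ℕ → H →L[ℂ] H) (hpn : ∀ n ξ, ‖p n ξ‖ ≤ ‖ξ‖)
    (hlim : ∀ ξ : H, Tendsto (fun n => p n ξ) atTop (𝓝 ξ))
    (w : H →L[ℂ] H) (hw : ∀ z, ‖w z‖ = ‖z‖) (ξ : H) :
    Tendsto (fun n => Real.sqrt (‖p n ξ‖ ^ 2 - ‖p n (w (p n ξ))‖ ^ 2)
      + ‖p n (w (p n ξ)) - w ξ‖ + ‖ξ - p n ξ‖) atTop (𝓝 0) := by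
  have h0 : Tendsto (fun n => ‖ξ - p n ξ‖) atTop (𝓝 0) := by
    have := (tendsto_const_nhds (x := ξ) (f := atTop)).sub (hlim ξ)
    rw [sub_self] at this
    simpa using this.norm
  have h1 : Tendsto (fun n => ‖p n (w (p n ξ)) - w ξ‖) atTop (𝓝 0) := by
    have hb : ∀ n, ‖p n (w (p n ξ)) - w ξ‖ ≤ ‖ξ - p n ξ‖ + ‖p n (w ξ) - w ξ‖ := by
      intro n
      have hsplit : p n (w (p n ξ)) - w ξ
          = p n (w (p n ξ - ξ)) + (p n (w ξ) - w ξ) := by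
        rw [map_sub, map_sub]; abel
      rw [hsplit]
      refine (norm_add_le _ _).trans ?_
      gcongr
      calc ‖p n (w (p n ξ - ξ))‖ ≤ ‖w (p n ξ - ξ)‖ := hpn n _
        _ = ‖p n ξ - ξ‖ := hw _
        _ = ‖ξ - p n ξ‖ := norm_sub_rev _ _
    have h2 : Tendsto (fun n => ‖p n (w ξ) - w ξ‖) atTop (𝓝 0) := by
      have := (hlim (w ξ)).sub (tendsto_const_nhds (x := w ξ))
      rw [sub_self] at this
      simpa using this.norm
    exact squeeze_zero (fun n => norm_nonneg _) hb (by simpa using h0.add h2)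
  have h2 : Tendsto (fun n => Real.sqrt (‖p n ξ‖ ^ 2 - ‖p n (w (p n ξ))‖ ^ 2))
      atTop (𝓝 0) := by
    have ha : Tendsto (fun n => ‖p n ξ‖ ^ 2) atTop (𝓝 (‖ξ‖ ^ 2)) :=
      ((hlim ξ).norm.pow 2)
    have hb : Tendsto (fun n => ‖p n (w (p n ξ))‖ ^ 2) atTop (𝓝 (‖ξ‖ ^ 2)) := by
      have : Tendsto (fun n => p n (w (p n ξ))) atTop (𝓝 (w ξ)) := by
        rw [tendsto_iff_norm_sub_tendsto_zero]
        simpa using h1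
      simpa [hw ξ] using this.norm.pow 2
    have := (ha.sub hb).sqrt
    simpa using this
  simpa using (h2.add h1).add h0

set_option maxHeartbeats 2000000 in
/-- Given a unitary `u` on a Hilbert space `H` and finite-rank orthogonal projections
`pₙ ↑ 1` (*-strongly), there are unitaries `vₙ = uₙ ⊕ (1 - pₙ)` with `uₙ` a unitary of
`pₙH` (i.e. `vₙ` is the identity on `(pₙH)ᗮ` and preserves `pₙH`) such that `vₙ → u`
in the *-strong operator topology. -/
theorem stmt4 {H : Type} [NormedAddCommGroup H] [InnerProductSpace ℂ H] [CompleteSpace H]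
    (u : H →L[ℂ] H) (hu : u ∈ unitary (H →L[ℂ] H))
    (p : ℕ → H →L[ℂ] H)
    (hproj : ∀ n, IsIdempotentElem (p n) ∧ IsSelfAdjoint (p n))
    (hrank : ∀ n, FiniteDimensional ℂ (LinearMap.range (p n : H →ₗ[ℂ] H)))
    (hmono : ∀ m n, m ≤ n → p n ∘L p m = p m ∧ p m ∘L p n = p m)
    (hlim : ∀ ξ : H, Tendsto (fun n => p n ξ) atTop (𝓝 ξ)) :
    ∃ v : ℕ → H →L[ℂ] H,
      (∀ n, v n ∈ unitary (H →L[ℂ] H)) ∧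
      (∀ n, ∀ ξ : H, p n ξ = 0 → v n ξ = ξ) ∧
      (∀ n, ∀ ξ : H, v n (p n ξ) = p n (v n (p n ξ))) ∧
      (∀ ξ : H, Tendsto (fun n => v n ξ) atTop (𝓝 (u ξ))) ∧
      (∀ ξ : H, Tendsto (fun n => ContinuousLinearMap.adjoint (v n) ξ) atTop
        (𝓝 (ContinuousLinearMap.adjoint u ξ))) := by
  classical
  -- basic facts about u
  have huu : ∀ ξ η : H, ⟪u ξ, u η⟫ = ⟪ξ, η⟫ := by
    intro ξ η
    have h1 : ContinuousLinearMap.adjoint u (u η) = η := by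
      have := hu.1
      rw [ContinuousLinearMap.star_eq_adjoint] at this
      calc ContinuousLinearMap.adjoint u (u η)
          = (ContinuousLinearMap.adjoint u * u) η := rfl
        _ = η := by rw [this]; rfl
    calc ⟪u ξ, u η⟫ = ⟪ξ, ContinuousLinearMap.adjoint u (u η)⟫ := by
          rw [ContinuousLinearMap.adjoint_inner_right]
      _ = ⟪ξ, η⟫ := by rw [h1]
  have hunorm : ∀ ξ : H, ‖u ξ‖ = ‖ξ‖ := by
    intro ξ
    have h1 : (‖u ξ‖ ^ 2 : ℝ) = ‖ξ‖ ^ 2 := by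
      have := huu ξ ξ
      rw [inner_self_eq_norm_sq_to_K, inner_self_eq_norm_sq_to_K] at this
      exact_mod_cast this
    nlinarith [norm_nonneg (u ξ), norm_nonneg ξ]
  have hustar : ∀ ξ η : H, ⟪ContinuousLinearMap.adjoint u ξ, ContinuousLinearMap.adjoint u η⟫
      = ⟪ξ, η⟫ := by
    intro ξ η
    have h1 : ∀ ζ : H, u (ContinuousLinearMap.adjoint u ζ) = ζ := by
      intro ζ
      have := hu.2
      rw [ContinuousLinearMap.star_eq_adjoint] at this
      calc u (ContinuousLinearMap.adjoint u ζ)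
          = (u * ContinuousLinearMap.adjoint u) ζ := rfl
        _ = ζ := by rw [this]; rfl
    calc ⟪ContinuousLinearMap.adjoint u ξ, ContinuousLinearMap.adjoint u η⟫
        = ⟪u (ContinuousLinearMap.adjoint u ξ), u (ContinuousLinearMap.adjoint u η)⟫ :=
          (huu _ _).symm
      _ = ⟪ξ, η⟫ := by rw [h1, h1]
  have hustarnorm : ∀ ξ : H, ‖ContinuousLinearMap.adjoint u ξ‖ = ‖ξ‖ := by
    intro ξ
    have h1 : (‖ContinuousLinearMap.adjoint u ξ‖ ^ 2 : ℝ) = ‖ξ‖ ^ 2 := by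
      have := hustar ξ ξ
      rw [inner_self_eq_norm_sq_to_K, inner_self_eq_norm_sq_to_K] at this
      exact_mod_cast this
    nlinarith [norm_nonneg (ContinuousLinearMap.adjoint u ξ), norm_nonneg ξ]
  -- basic facts about the projections
  have hP2 : ∀ n (ξ : H), p n (p n ξ) = p n ξ := by
    intro n ξ
    have := (hproj n).1
    calc p n (p n ξ) = (p n * p n) ξ := rfl
      _ = p n ξ := by rw [this]
  have hPsa : ∀ n (ξ η : H), ⟪p n ξ, η⟫ = ⟪ξ, p n η⟫ := by
    intro n ξ η
    have h1 := (hproj n).2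
    rw [IsSelfAdjoint, ContinuousLinearMap.star_eq_adjoint] at h1
    calc ⟪p n ξ, η⟫ = ⟪ContinuousLinearMap.adjoint (p n) ξ, η⟫ := by rw [h1]
      _ = ⟪ξ, p n η⟫ := ContinuousLinearMap.adjoint_inner_left _ _ _
  have hPnorm : ∀ n (ξ : H), ‖p n ξ‖ ≤ ‖ξ‖ := by
    intro n ξ
    have h1 : ⟪p n ξ, p n ξ⟫ = ⟪ξ, p n ξ⟫ := by
      rw [hPsa n ξ (p n ξ), hP2]
    have h2 : (‖p n ξ‖ ^ 2 : ℝ) = Complex.re ⟪ξ, p n ξ⟫ := by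
      rw [← h1]
      exact (norm_sq_eq_re_inner (𝕜 := ℂ) (p n ξ))
    have h3 : Complex.re ⟪ξ, p n ξ⟫ ≤ ‖ξ‖ * ‖p n ξ‖ := by
      calc Complex.re ⟪ξ, p n ξ⟫ ≤ ‖⟪ξ, p n ξ⟫‖ := Complex.re_le_norm _
        _ = ‖⟪ξ, p n ξ⟫‖ := rfl
        _ ≤ ‖ξ‖ * ‖p n ξ‖ := norm_inner_le_norm _ _
    nlinarith [norm_nonneg (p n ξ), norm_nonneg ξ]
  -- membership facts
  have hPmem : ∀ n (ξ : H), p n ξ ∈ LinearMap.range (p n : H →ₗ[ℂ] H) := fun n ξ =>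
    LinearMap.mem_range_self _ ξ
  have hPK : ∀ n (k : H), k ∈ LinearMap.range (p n : H →ₗ[ℂ] H) → p n k = k := by
    intro n k hk
    obtain ⟨z, rfl⟩ := hk
    exact hP2 n z
  have hperp : ∀ n (ξ k : H), k ∈ LinearMap.range (p n : H →ₗ[ℂ] H) → ⟪ξ - p n ξ, k⟫ = 0 := by
    intro n ξ k hk
    have h1 : ⟪p n ξ, k⟫ = ⟪ξ, k⟫ := by
      rw [hPsa n, hPK n k hk]
    rw [inner_sub_left, h1, sub_self]
  have hinnerPP : ∀ n (ξ η : H), ⟪p n ξ, p n η⟫ = ⟪ξ, p n η⟫ := by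
    intro n ξ η
    have := hPsa n ξ (p n η)
    rw [hP2 n η] at this
    exact this
  have key : ∀ n, ∃ vn : H →L[ℂ] H,
      vn ∈ unitary (H →L[ℂ] H) ∧
      (∀ ξ, p n ξ = 0 → vn ξ = ξ) ∧
      (∀ ξ, vn (p n ξ) = p n (vn (p n ξ))) ∧
      (∀ ξ, ‖vn ξ - u ξ‖ ≤ Real.sqrt (‖p n ξ‖ ^ 2 - ‖p n (u (p n ξ))‖ ^ 2)
          + ‖p n (u (p n ξ)) - u ξ‖ + ‖ξ - p n ξ‖) ∧
      (∀ ξ, ‖ContinuousLinearMap.adjoint vn ξ - ContinuousLinearMap.adjoint u ξ‖ ≤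
          Real.sqrt (‖p n ξ‖ ^ 2
            - ‖p n (ContinuousLinearMap.adjoint u (p n ξ))‖ ^ 2)
          + ‖p n (ContinuousLinearMap.adjoint u (p n ξ)) - ContinuousLinearMap.adjoint u ξ‖
          + ‖ξ - p n ξ‖) := by
    intro n
    haveI := hrank n
    set K := LinearMap.range (p n : H →ₗ[ℂ] H) with hKdef
    set T : ↥K →ₗ[ℂ] ↥K :=
      { toFun := fun x => ⟨p n (u ↑x), hPmem n _⟩
        map_add' := fun x y => by ext; simp
        map_smul' := fun c x => by ext; simp } with hTdef
    set S : ↥K →ₗ[ℂ] ↥K :=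
      { toFun := fun y => ⟨p n (ContinuousLinearMap.adjoint u ↑y), hPmem n _⟩
        map_add' := fun x y => by ext; simp
        map_smul' := fun c x => by ext; simp } with hSdef
    have hTcon : ∀ x : ↥K, ‖T x‖ ≤ ‖x‖ := by
      intro x
      show ‖p n (u ↑x)‖ ≤ ‖x‖
      calc ‖p n (u ↑x)‖ ≤ ‖u ↑x‖ := hPnorm n _
        _ = ‖(↑x : H)‖ := hunorm _
        _ = ‖x‖ := rfl
    have hSadj : S = LinearMap.adjoint T := by
      rw [LinearMap.eq_adjoint_iff]
      intro x y
      rw [Submodule.coe_inner, Submodule.coe_inner]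
      show ⟪p n (ContinuousLinearMap.adjoint u ↑x), (↑y : H)⟫ = ⟪(↑x : H), p n (u ↑y)⟫
      calc ⟪p n (ContinuousLinearMap.adjoint u ↑x), (↑y : H)⟫
          = ⟪ContinuousLinearMap.adjoint u ↑x, p n ↑y⟫ := hPsa n _ _
        _ = ⟪ContinuousLinearMap.adjoint u ↑x, (↑y : H)⟫ := by rw [hPK n _ y.2]
        _ = ⟪(↑x : H), u ↑y⟫ := ContinuousLinearMap.adjoint_inner_left u _ _
        _ = ⟪p n ↑x, u ↑y⟫ := by rw [hPK n _ x.2]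
        _ = ⟪(↑x : H), p n (u ↑y)⟫ := hPsa n _ _
    obtain ⟨W, fwd, bwd⟩ := exists_unitary_close T hTcon
    set Pc : H →L[ℂ] ↥K := (p n).codRestrict K (hPmem n) with hPcdef
    set v : H →L[ℂ] H :=
      (K.subtypeL.comp (W.toLinearIsometry.toContinuousLinearMap)).comp Pc + (1 - p n)
      with hvdef
    set v' : H →L[ℂ] H :=
      (K.subtypeL.comp (W.symm.toLinearIsometry.toContinuousLinearMap)).comp Pc + (1 - p n)
      with hv'def
    have hva : ∀ ξ, v ξ = ↑(W ⟨p n ξ, hPmem n ξ⟩) + (ξ - p n ξ) := fun ξ => rfl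
    have hv'a : ∀ ξ, v' ξ = ↑(W.symm ⟨p n ξ, hPmem n ξ⟩) + (ξ - p n ξ) := fun ξ => rfl
    have hvinner : ∀ ξ η, ⟪v ξ, v η⟫ = ⟪ξ, η⟫ := by
      intro ξ η
      rw [hva, hva]
      set a : ↥K := W ⟨p n ξ, hPmem n ξ⟩ with ha
      set bq : ↥K := W ⟨p n η, hPmem n η⟩ with hbq
      rw [inner_add_left, inner_add_right, inner_add_right]
      have h1 : ⟪(a : H), (bq : H)⟫ = ⟪p n ξ, p n η⟫ := by
        rw [← Submodule.coe_inner, ha, hbq, LinearIsometryEquiv.inner_map_map,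
          Submodule.coe_inner]
      have h2 : ⟪(a : H), η - p n η⟫ = 0 := by
        rw [← inner_conj_symm, hperp n η _ a.2, map_zero]
      have h3 : ⟪ξ - p n ξ, (bq : H)⟫ = 0 := hperp n ξ _ bq.2
      have h4 : ⟪ξ - p n ξ, η - p n η⟫ = ⟪ξ, η⟫ - ⟪p n ξ, p n η⟫ := by
        rw [inner_sub_left, inner_sub_right, inner_sub_right]
        have e1 : ⟪ξ, p n η⟫ = ⟪p n ξ, p n η⟫ := (hinnerPP n ξ η).symm
        have e2 : ⟪p n ξ, η⟫ = ⟪p n ξ, p n η⟫ := by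
          rw [hPsa n, hinnerPP n]
        rw [e1, e2]
        ring
      rw [h1, h2, h3, h4]
      ring
    have hvv' : ∀ ξ, v (v' ξ) = ξ := by
      intro ξ
      set a : ↥K := W.symm ⟨p n ξ, hPmem n ξ⟩ with ha
      have h1 : p n (v' ξ) = ↑a := by
        rw [hv'a, map_add, map_sub, hP2, hPK n _ a.2]
        simp
      have h2 : (⟨p n (v' ξ), hPmem n _⟩ : ↥K) = a := Subtype.ext h1
      rw [hva (v' ξ), h2, h1, hv'a, ha, LinearIsometryEquiv.apply_symm_apply]
      simp only [Submodule.coe_mk]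
      abel
    have hv'v : ∀ ξ, v' (v ξ) = ξ := by
      intro ξ
      set a : ↥K := W ⟨p n ξ, hPmem n ξ⟩ with ha
      have h1 : p n (v ξ) = ↑a := by
        rw [hva, map_add, map_sub, hP2, hPK n _ a.2]
        simp
      have h2 : (⟨p n (v ξ), hPmem n _⟩ : ↥K) = a := Subtype.ext h1
      rw [hv'a (v ξ), h2, h1, hva, ha, LinearIsometryEquiv.symm_apply_apply]
      simp only [Submodule.coe_mk]
      abel
    have hadj : v' = ContinuousLinearMap.adjoint v := by
      rw [ContinuousLinearMap.eq_adjoint_iff]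
      intro x y
      calc ⟪v' x, y⟫ = ⟪v (v' x), v y⟫ := (hvinner _ _).symm
        _ = ⟪x, v y⟫ := by rw [hvv']
    have hstar : star v = v' := by
      rw [ContinuousLinearMap.star_eq_adjoint, ← hadj]
    have hmem : v ∈ unitary (H →L[ℂ] H) := by
      constructor
      · ext ξ
        show star v (v ξ) = ξ
        rw [hstar]
        exact hv'v ξ
      · ext ξ
        show v (star v ξ) = ξ
        rw [hstar]
        exact hvv' ξ
    have cond2 : ∀ ξ, p n ξ = 0 → v ξ = ξ := by
      intro ξ h
      rw [hva]
      have h0 : (⟨p n ξ, hPmem n ξ⟩ : ↥K) = 0 := Subtype.ext h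
      rw [h0, map_zero, h]
      simp
    have cond3 : ∀ ξ, v (p n ξ) = p n (v (p n ξ)) := by
      intro ξ
      have hidx : (⟨p n (p n ξ), hPmem n (p n ξ)⟩ : ↥K) = ⟨p n ξ, hPmem n ξ⟩ :=
        Subtype.ext (hP2 n ξ)
      have h0 : v (p n ξ) = ↑(W ⟨p n ξ, hPmem n ξ⟩) := by
        rw [hva, hidx, hP2]
        simp
      rw [h0, hPK n _ (W ⟨p n ξ, hPmem n ξ⟩).2]
    have est1 : ∀ ξ, ‖v ξ - u ξ‖ ≤ Real.sqrt (‖p n ξ‖ ^ 2 - ‖p n (u (p n ξ))‖ ^ 2)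
        + ‖p n (u (p n ξ)) - u ξ‖ + ‖ξ - p n ξ‖ := by
      intro ξ
      set x : ↥K := ⟨p n ξ, hPmem n ξ⟩ with hx
      have hTx : (↑(T x) : H) = p n (u (p n ξ)) := rfl
      have hsplit : v ξ - u ξ = ((↑(W x) : H) - ↑(T x)) + ((↑(T x) : H) - u ξ)
          + (ξ - p n ξ) := by
        rw [hva]
        abel
      have hWT : ‖(↑(W x) : H) - ↑(T x)‖
          ≤ Real.sqrt (‖p n ξ‖ ^ 2 - ‖p n (u (p n ξ))‖ ^ 2) := by
        have h1 := fwd x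
        have h2 : ‖W x - T x‖ = ‖(↑(W x) : H) - ↑(T x)‖ := rfl
        have h3 : ‖x‖ = ‖p n ξ‖ := rfl
        have h4 : ‖T x‖ = ‖p n (u (p n ξ))‖ := rfl
        rw [h2, h3, h4] at h1
        calc ‖(↑(W x) : H) - ↑(T x)‖
            = Real.sqrt (‖(↑(W x) : H) - ↑(T x)‖ ^ 2) :=
              (Real.sqrt_sq (norm_nonneg _)).symm
          _ ≤ Real.sqrt (‖p n ξ‖ ^ 2 - ‖p n (u (p n ξ))‖ ^ 2) := Real.sqrt_le_sqrt h1
      calc ‖v ξ - u ξ‖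
          ≤ ‖(↑(W x) : H) - ↑(T x)‖ + ‖(↑(T x) : H) - u ξ‖ + ‖ξ - p n ξ‖ := by
            rw [hsplit]
            exact norm_add₃_le
        _ ≤ Real.sqrt (‖p n ξ‖ ^ 2 - ‖p n (u (p n ξ))‖ ^ 2)
            + ‖p n (u (p n ξ)) - u ξ‖ + ‖ξ - p n ξ‖ := by
            gcongr
            exact le_of_eq (by rw [hTx])
    have est2 : ∀ ξ, ‖ContinuousLinearMap.adjoint v ξ - ContinuousLinearMap.adjoint u ξ‖
        ≤ Real.sqrt (‖p n ξ‖ ^ 2 - ‖p n (ContinuousLinearMap.adjoint u (p n ξ))‖ ^ 2)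
          + ‖p n (ContinuousLinearMap.adjoint u (p n ξ)) - ContinuousLinearMap.adjoint u ξ‖
          + ‖ξ - p n ξ‖ := by
      intro ξ
      rw [← hadj]
      set x : ↥K := ⟨p n ξ, hPmem n ξ⟩ with hx
      have hSx : (↑(S x) : H) = p n (ContinuousLinearMap.adjoint u (p n ξ)) := rfl
      have hsplit : v' ξ - ContinuousLinearMap.adjoint u ξ
          = ((↑(W.symm x) : H) - ↑(S x)) + ((↑(S x) : H) - ContinuousLinearMap.adjoint u ξ)
          + (ξ - p n ξ) := by
        rw [hv'a]
        abel
      have hWT : ‖(↑(W.symm x) : H) - ↑(S x)‖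
          ≤ Real.sqrt (‖p n ξ‖ ^ 2 - ‖p n (ContinuousLinearMap.adjoint u (p n ξ))‖ ^ 2) := by
        have h1 := bwd x
        rw [← hSadj] at h1
        have h2 : ‖W.symm x - S x‖ = ‖(↑(W.symm x) : H) - ↑(S x)‖ := rfl
        have h3 : ‖x‖ = ‖p n ξ‖ := rfl
        have h4 : ‖S x‖ = ‖p n (ContinuousLinearMap.adjoint u (p n ξ))‖ := rfl
        rw [h2, h3, h4] at h1
        calc ‖(↑(W.symm x) : H) - ↑(S x)‖
            = Real.sqrt (‖(↑(W.symm x) : H) - ↑(S x)‖ ^ 2) :=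
              (Real.sqrt_sq (norm_nonneg _)).symm
          _ ≤ _ := Real.sqrt_le_sqrt h1
      calc ‖v' ξ - ContinuousLinearMap.adjoint u ξ‖
          ≤ ‖(↑(W.symm x) : H) - ↑(S x)‖
            + ‖(↑(S x) : H) - ContinuousLinearMap.adjoint u ξ‖ + ‖ξ - p n ξ‖ := by
            rw [hsplit]
            exact norm_add₃_le
        _ ≤ _ := by
            gcongr
            exact le_of_eq (by rw [hSx])
    exact ⟨v, hmem, cond2, cond3, est1, est2⟩
  choose vv h1 h2 h3 h4 h5 using key
  refine ⟨vv, h1, h2, h3, ?_, ?_⟩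
  · intro ξ
    rw [tendsto_iff_norm_sub_tendsto_zero]
    exact squeeze_zero (fun n => norm_nonneg _) (fun n => h4 n ξ)
      (conv_aux p hPnorm hlim u hunorm ξ)
  · intro ξ
    rw [tendsto_iff_norm_sub_tendsto_zero]
    exact squeeze_zero (fun n => norm_nonneg _) (fun n => h5 n ξ)
      (conv_aux p hPnorm hlim (ContinuousLinearMap.adjoint u) hustarnorm ξ)
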